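/- Let A be a Noetherian domain, I a nonzero ideal, and a/b ∈ ℚ_{>0}. Then the rational power I^{a/b} = {x ∈ A | x^b ∈ \overline{I^a}} is an ideal of A (closed under addition and under multiplication by elements of A). -/

import Mathlib

/-- `x` satisfies an equation of integral dependence over the ideal `I`. -/
def IsIntegralOverIdeal {A : Type*} [CommRing A] (I : Ideal A) (x : A) : Prop :=
  ∃ n : ℕ, 0 < n ∧ ∃ c : ℕ → A, (∀ i ∈ Finset.Icc 1 n, c i ∈ I ^ i) ∧
    x ^ n + ∑ i ∈ Finset.Icc 1 n, c i * x ^ (n - i) = 0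

/-- The integral closure of an ideal, as a set. -/
def intCl {A : Type*} [CommRing A] (I : Ideal A) : Set A :=
  {x | IsIntegralOverIdeal I x}

/-- The rational power `I^{a/b}` of an ideal, as a set. -/
def ratPow {A : Type*} [CommRing A] (I : Ideal A) (a b : ℕ) : Set A :=
  {x | x ^ b ∈ intCl (I ^ a)}

/-- The rational power `I^q` for a rational exponent `q` (in lowest terms). -/
def ratPowQ {A : Type*} [CommRing A] (I : Ideal A) (q : ℚ) : Set A :=
  ratPow I q.num.toNat q.den

section Aux

variable {A : Type*} [CommRing A] [IsDomain A]

/-- Witness predicate: there is a nonzero ideal `M` with `xM ⊆ JM`. -/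
def GoodWit (J : Ideal A) (x : A) : Prop :=
  ∃ M : Ideal A, M ≠ ⊥ ∧ Ideal.span {x} * M ≤ J * M

lemma top_ne_bot' : (⊤ : Ideal A) ≠ ⊥ := by
  intro h
  have : (1 : A) ∈ (⊤ : Ideal A) := trivial
  rw [h] at this
  exact one_ne_zero ((Submodule.mem_bot A).mp this)

lemma good_zero (J : Ideal A) : GoodWit J 0 := by
  refine ⟨⊤, top_ne_bot', ?_⟩
  rw [Ideal.span_singleton_eq_bot.mpr rfl]
  exact Ideal.mul_mono bot_le le_rfl

lemma good_add {J : Ideal A} {x y : A} (hx : GoodWit J x) (hy : GoodWit J y) :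
    GoodWit J (x + y) := by
  obtain ⟨M, hM, hMle⟩ := hx
  obtain ⟨N, hN, hNle⟩ := hy
  refine ⟨M * N, mul_ne_zero hM hN, ?_⟩
  have hspan : Ideal.span {x + y} ≤ Ideal.span {x} + Ideal.span {y} := by
    rw [Ideal.span_le, Set.singleton_subset_iff]
    exact Submodule.add_mem_sup (Ideal.mem_span_singleton_self x)
      (Ideal.mem_span_singleton_self y)
  calc Ideal.span {x + y} * (M * N)
      ≤ (Ideal.span {x} + Ideal.span {y}) * (M * N) := Ideal.mul_mono_left hspan
    _ = Ideal.span {x} * M * N + Ideal.span {y} * N * M := by ring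
    _ ≤ J * M * N + J * N * M := by
        exact add_le_add (Ideal.mul_mono_left hMle) (Ideal.mul_mono_left hNle)
    _ = J * (M * N) + J * (M * N) := by ring_nf
    _ = J * (M * N) := by rw [Submodule.add_eq_sup, sup_idem]

lemma good_mul {J K : Ideal A} {x y : A} (hx : GoodWit J x) (hy : GoodWit K y) :
    GoodWit (J * K) (x * y) := by
  obtain ⟨M, hM, hMle⟩ := hx
  obtain ⟨N, hN, hNle⟩ := hy
  refine ⟨M * N, mul_ne_zero hM hN, ?_⟩
  calc Ideal.span {x * y} * (M * N)
      = (Ideal.span {x} * M) * (Ideal.span {y} * N) := by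
        rw [← Ideal.span_singleton_mul_span_singleton]; ring
    _ ≤ (J * M) * (K * N) := Ideal.mul_mono hMle hNle
    _ = (J * K) * (M * N) := by ring

lemma good_pow {J : Ideal A} {x : A} (hx : GoodWit J x) (k : ℕ) :
    GoodWit (J ^ k) (x ^ k) := by
  induction k with
  | zero =>
      refine ⟨⊤, top_ne_bot', ?_⟩
      simp
  | succ k ih =>
      rw [pow_succ, pow_succ]
      exact good_mul ih hx

lemma good_smul {J : Ideal A} {x : A} (r : A) (hx : GoodWit J x) : GoodWit J (r * x) := by
  obtain ⟨M, hM, hle⟩ := hx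
  refine ⟨M, hM, le_trans (Ideal.mul_mono_left ?_) hle⟩
  exact Ideal.span_singleton_le_span_singleton.mpr (dvd_mul_left x r)

lemma sum_ideal_le {ι : Type*} {s : Finset ι} {f : ι → Ideal A} {K : Ideal A}
    (h : ∀ j ∈ s, f j ≤ K) : ∑ j ∈ s, f j ≤ K := by
  classical
  induction s using Finset.induction_on with
  | empty => simp
  | insert _ _ hj ih =>
      rw [Finset.sum_insert hj, Submodule.add_eq_sup]
      exact sup_le (h _ (Finset.mem_insert_self _ _))
        (ih fun j hjs => h j (Finset.mem_insert_of_mem hjs))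

/-- The key construction: if `z^b · W ⊆ J · M'` where
`M' = ∑_{j<b} (z^j) J^{b-1-j} W`, then `z` has a witness for `J`. -/
lemma good_of_aux {J W : Ideal A} {z : A} {b : ℕ} (hb : 0 < b) (hW : W ≠ ⊥) (hJ : J ≠ ⊥)
    (h : Ideal.span {z ^ b} * W ≤
      J * ∑ j ∈ Finset.range b, Ideal.span {z ^ j} * (J ^ (b - 1 - j) * W)) :
    GoodWit J z := by
  set M := ∑ j ∈ Finset.range b, Ideal.span {z ^ j} * (J ^ (b - 1 - j) * W) with hMdef
  have hterm : ∀ j ∈ Finset.range b, Ideal.span {z ^ j} * (J ^ (b - 1 - j) * W) ≤ M :=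
    fun j hj => Finset.single_le_sum (f := fun j => Ideal.span {z ^ j} * (J ^ (b - 1 - j) * W))
      (fun _ _ => bot_le) hj
  have hM0 : J ^ (b - 1) * W ≤ M := by
    have := hterm 0 (Finset.mem_range.mpr hb)
    simpa using this
  refine ⟨M, ?_, ?_⟩
  · intro hbot
    have : J ^ (b - 1) * W = ⊥ := le_bot_iff.mp (hbot ▸ hM0)
    exact (mul_ne_zero (pow_ne_zero _ hJ) hW) this
  · rw [hMdef, Finset.mul_sum]
    apply sum_ideal_le
    intro j hj
    rw [Finset.mem_range] at hj
    have hrw : Ideal.span {z} * (Ideal.span {z ^ j} * (J ^ (b - 1 - j) * W)) =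
        Ideal.span {z ^ (j + 1)} * (J ^ (b - 1 - j) * W) := by
      rw [← mul_assoc, Ideal.span_singleton_mul_span_singleton, ← pow_succ']
    rw [hrw]
    rcases eq_or_lt_of_le (Nat.succ_le_of_lt hj) with hcase | hcase
    · -- j + 1 = b
      have h1 : b - 1 - j = 0 := by omega
      have h2 : (j : ℕ) + 1 = b := hcase
      rw [h1, pow_zero, one_mul, h2]
      exact h
    · -- j + 1 < b
      have h1 : J ^ (b - 1 - j) = J * J ^ (b - 1 - (j + 1)) := by
        rw [show b - 1 - j = (b - 1 - (j + 1)) + 1 by omega, pow_succ' J]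
      rw [h1]
      calc Ideal.span {z ^ (j + 1)} * (J * J ^ (b - 1 - (j + 1)) * W)
          = J * (Ideal.span {z ^ (j + 1)} * (J ^ (b - 1 - (j + 1)) * W)) := by ring
        _ ≤ J * M := Ideal.mul_mono_right (hterm (j + 1) (Finset.mem_range.mpr hcase))

lemma good_of_pow {J : Ideal A} {z : A} {b : ℕ} (hb : 0 < b) (hJ : J ≠ ⊥)
    (h : GoodWit (J ^ b) (z ^ b)) : GoodWit J z := by
  obtain ⟨W, hW, hle⟩ := h
  refine good_of_aux hb hW hJ (le_trans hle ?_)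
  have hb' : J ^ b = J * J ^ (b - 1) := by
    conv_lhs => rw [show b = (b - 1) + 1 by omega]
    rw [pow_succ']
  rw [hb', mul_assoc]
  refine Ideal.mul_mono_right ?_
  have := Finset.single_le_sum
    (f := fun j => Ideal.span {z ^ j} * (J ^ (b - 1 - j) * W))
    (fun (i : ℕ) _ => bot_le) (Finset.mem_range.mpr hb)
  simpa using this

lemma good_of_isIntegral {J : Ideal A} {x : A} (hJ : J ≠ ⊥)
    (h : IsIntegralOverIdeal J x) : GoodWit J x := by
  obtain ⟨n, hn, c, hc, heq⟩ := h
  refine good_of_aux (W := ⊤) hn top_ne_bot' hJ ?_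
  rw [Ideal.mul_top, Ideal.span_le, Set.singleton_subset_iff]
  set M := ∑ j ∈ Finset.range n, Ideal.span {x ^ j} * (J ^ (n - 1 - j) * ⊤) with hMdef
  have hterm : ∀ j ∈ Finset.range n, Ideal.span {x ^ j} * (J ^ (n - 1 - j) * ⊤) ≤ M :=
    fun j hj => Finset.single_le_sum (f := fun j => Ideal.span {x ^ j} * (J ^ (n - 1 - j) * ⊤))
      (fun _ _ => bot_le) hj
  have hxn : x ^ n = ∑ i ∈ Finset.Icc 1 n, -(c i * x ^ (n - i)) := by
    rw [Finset.sum_neg_distrib]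
    exact eq_neg_of_add_eq_zero_left heq
  rw [hxn]
  apply Submodule.sum_mem
  intro i hi
  apply Submodule.neg_mem
  rw [Finset.mem_Icc] at hi
  -- c i * x ^ (n - i) ∈ J * M
  have h1 : c i * x ^ (n - i) ∈ J ^ i * Ideal.span {x ^ (n - i)} :=
    Ideal.mul_mem_mul (hc i (Finset.mem_Icc.mpr hi)) (Ideal.mem_span_singleton_self _)
  have h2 : J ^ i * Ideal.span {x ^ (n - i)} ≤ J * M := by
    have hi1 : J ^ i = J * J ^ (i - 1) := by
      conv_lhs => rw [show i = (i - 1) + 1 by omega]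
      rw [pow_succ']
    calc J ^ i * Ideal.span {x ^ (n - i)}
        = J * (Ideal.span {x ^ (n - i)} * (J ^ (i - 1) * ⊤)) := by
          rw [Ideal.mul_top, hi1, mul_assoc, mul_comm (J ^ (i - 1)) (Ideal.span {x ^ (n - i)})]
      _ ≤ J * M := by
          refine Ideal.mul_mono_right ?_
          have hni : n - i ∈ Finset.range n := Finset.mem_range.mpr (by omega)
          have := hterm (n - i) hni
          have hexp : n - 1 - (n - i) = i - 1 := by omega
          rwa [hexp] at this
  exact h2 h1

lemma isIntegral_of_good [IsNoetherianRing A] {J : Ideal A} {x : A}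
    (h : GoodWit J x) : IsIntegralOverIdeal J x := by
  obtain ⟨M, hM, hle⟩ := h
  haveI : Module.Finite A M := Module.Finite.iff_fg.mpr (IsNoetherian.noetherian M)
  set f : Module.End A M := algebraMap A (Module.End A M) x with hf
  have hrange : LinearMap.range f ≤ J • (⊤ : Submodule A M) := by
    rintro _ ⟨m, rfl⟩
    rw [Submodule.mem_smul_top_iff]
    have : (f m : A) = x * (m : A) := by
      rw [hf, Module.algebraMap_end_apply]; rfl
    rw [this, Ideal.smul_eq_mul]
    exact hle (Ideal.mul_mem_mul (Ideal.mem_span_singleton_self x) m.2)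
  obtain ⟨p, hmonic, -, hcoeff, haeval⟩ :=
    LinearMap.exists_monic_and_natDegree_eq_and_coeff_mem_pow_and_aeval_eq_zero (R := A) (M := M) f J hrange
  -- evaluate to get p.eval x = 0
  obtain ⟨m, hmM, hm0⟩ := Submodule.exists_mem_ne_zero_of_ne_bot hM
  have heval : p.eval x = 0 := by
    rw [hf, Polynomial.aeval_algebraMap_apply_eq_algebraMap_eval] at haeval
    have h1 := congrArg (fun g : Module.End A M => ((g ⟨m, hmM⟩ : M) : A)) haeval
    simp only [Module.algebraMap_end_apply, LinearMap.zero_apply] at h1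
    have hzm : p.eval x * m = 0 := by
      simpa [smul_eq_mul] using h1
    rcases mul_eq_zero.mp hzm with h0 | h0
    · exact h0
    · exact absurd h0 hm0
  set n := p.natDegree with hn
  have hn0 : 0 < n := by
    rcases Nat.eq_zero_or_pos n with h0 | h0
    · exfalso
      have := hmonic.natDegree_eq_zero.mp h0
      rw [this] at heval
      simp at heval
    · exact h0
  refine ⟨n, hn0, fun i => p.coeff (n - i), ?_, ?_⟩
  · intro i hi
    rw [Finset.mem_Icc] at hi
    have := hcoeff (n - i)
    have hexp : n - (n - i) = i := by omega
    rwa [hexp] at this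
  · have hsum : ∑ i ∈ Finset.Icc 1 n, p.coeff (n - i) * x ^ (n - i) =
        ∑ k ∈ Finset.range n, p.coeff k * x ^ k := by
      refine Finset.sum_bij' (fun i _ => n - i) (fun k _ => n - k) ?_ ?_ ?_ ?_ ?_
      · intro i hi; simp only [Finset.mem_Icc] at hi
        simp only [Finset.mem_range, ← hn]; omega
      · intro k hk; simp only [Finset.mem_range, ← hn] at hk
        simp only [Finset.mem_Icc]; omega
      · intro i hi; simp only [Finset.mem_Icc] at hi; omega
      · intro k hk; simp only [Finset.mem_range, ← hn] at hk; omega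
      · intro i _; rfl
    rw [hsum]
    rw [Polynomial.eval_eq_sum_range, Finset.sum_range_succ, hmonic.coeff_natDegree,
      one_mul] at heval
    rw [add_comm]
    exact heval

end Aux

theorem ratPow_isIdeal' {A : Type*} [CommRing A] [IsDomain A] [IsNoetherianRing A]
    (I : Ideal A) (hI : I ≠ ⊥) (a b : ℕ) (ha : 0 < a) (hb : 0 < b) :
    (0 : A) ∈ ratPow I a b ∧
      (∀ x ∈ ratPow I a b, ∀ y ∈ ratPow I a b, x + y ∈ ratPow I a b) ∧
      (∀ r : A, ∀ x ∈ ratPow I a b, r * x ∈ ratPow I a b) := by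
  have hJ : I ^ a ≠ ⊥ := pow_ne_zero a hI
  have hmem : ∀ x : A, x ∈ ratPow I a b ↔ IsIntegralOverIdeal (I ^ a) (x ^ b) := fun _ => Iff.rfl
  refine ⟨?_, ?_, ?_⟩
  · rw [hmem, zero_pow hb.ne']
    exact ⟨1, one_pos, fun _ => 0, fun i _ => Submodule.zero_mem _, by simp⟩
  · intro x hx y hy
    rw [hmem] at hx hy ⊢
    have hgx : GoodWit (I ^ a) (x ^ b) := good_of_isIntegral hJ hx
    have hgy : GoodWit (I ^ a) (y ^ b) := good_of_isIntegral hJ hy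
    apply isIntegral_of_good
    rw [add_pow]
    apply Finset.sum_induction _ (GoodWit (I ^ a)) (fun _ _ => good_add) (good_zero _)
    intro k hk
    rw [Finset.mem_range] at hk
    have hkb : k ≤ b := by omega
    -- term is x^k * y^(b-k) * C(b,k)
    have hterm : GoodWit (I ^ a) (x ^ k * y ^ (b - k)) := by
      apply good_of_pow hb hJ
      have : (x ^ k * y ^ (b - k)) ^ b = (x ^ b) ^ k * (y ^ b) ^ (b - k) := by
        rw [mul_pow, ← pow_mul, ← pow_mul, ← pow_mul, ← pow_mul, Nat.mul_comm k b,
          Nat.mul_comm (b - k) b]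
      rw [this]
      have hpow : (I ^ a) ^ b = (I ^ a) ^ k * (I ^ a) ^ (b - k) := by
        rw [← pow_add]; congr 1; omega
      rw [hpow]
      exact good_mul (good_pow hgx k) (good_pow hgy (b - k))
    have := good_smul ((b.choose k : A)) hterm
    rwa [mul_comm] at this
  · intro r x hx
    rw [hmem] at hx ⊢
    apply isIntegral_of_good
    rw [mul_pow]
    exact good_smul _ (good_of_isIntegral hJ hx)


/-- In a Noetherian domain, the rational power
`I^{a/b} = {x | x^b ∈ \overline{I^a}}` of a nonzero ideal is an ideal: it contains `0`
and is closed under addition and under multiplication by ring elements. -/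
theorem ratPow_isIdeal {A : Type*} [CommRing A] [IsDomain A] [IsNoetherianRing A]
    (I : Ideal A) (hI : I ≠ ⊥) (a b : ℕ) (ha : 0 < a) (hb : 0 < b) :
    (0 : A) ∈ ratPow I a b ∧
      (∀ x ∈ ratPow I a b, ∀ y ∈ ratPow I a b, x + y ∈ ratPow I a b) ∧
      (∀ r : A, ∀ x ∈ ratPow I a b, r * x ∈ ratPow I a b) :=
  ratPow_isIdeal' I hI a b ha hb
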